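/- Fix an integer d ≥ 3, u > 0, θ ∈ (−π/2, π/2) and φ₁, …, φ_{d−2} ∈ (−π/2, π/2). For R > 0 let v(R) ∈ ℝ^d be the vector (R sinθ cosφ_{d−2}⋯cosφ₂cosφ₁, R sinθ cosφ_{d−2}⋯cosφ₂ sinφ₁, R sinθ cosφ_{d−2}⋯cosφ₃ sinφ₂, …, R sinθ sinφ_{d−2}, R cosθ). Let x = (−u, 0, …, 0, −1) ∈ ℝ^d and let C̄ = {y ∈ ℝ^d : y₂² + ⋯ + y_d² = 1} be the infinite unit cylinder. Then R* = 2cosθ/(1 − sin²θ cos²φ_{d−2}⋯cos²φ₁) is the unique R > 0 such that x + v(R) ∈ C̄. -/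

import Mathlib

open Real Set

noncomputable section

/-- The direction vector `v(R)` of the reflected ray, in `ℝ^d` (coordinates indexed by
`Fin d`, zero-based): the first coordinate is `R sin θ cos φ_{d-2} ⋯ cos φ₁`, the
`m`-th coordinate (for `2 ≤ m ≤ d-1`, one-based) is
`R sin θ cos φ_{d-2} ⋯ cos φ_m sin φ_{m-1}`, and the last coordinate is `R cos θ`. -/
def rayVector (d : ℕ) (θ : ℝ) (φ : Fin (d - 2) → ℝ) (R : ℝ) :
    EuclideanSpace ℝ (Fin d) := WithLp.toLp 2 fun (i : Fin d) =>
  if h0 : (i : ℕ) = 0 then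
    R * Real.sin θ * ∏ j : Fin (d - 2), Real.cos (φ j)
  else if hlast : (i : ℕ) = d - 1 then
    R * Real.cos θ
  else
    R * Real.sin θ * Real.sin (φ ⟨(i : ℕ) - 1, by
        have h1 := i.isLt; omega⟩) *
      ∏ j ∈ Finset.univ.filter (fun j : Fin (d - 2) => (i : ℕ) ≤ (j : ℕ)),
        Real.cos (φ j)

/-- The starting point `x = (-u, 0, …, 0, -1) ∈ ℝ^d`. -/
def rayStart (d : ℕ) (u : ℝ) : EuclideanSpace ℝ (Fin d) := WithLp.toLp 2 fun (i : Fin d) =>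
  if (i : ℕ) = 0 then -u else if (i : ℕ) = d - 1 then -1 else 0

/-- Telescoping identity over `ℕ` ranges. -/
private lemma tele_aux (c : ℕ → ℝ) (n : ℕ) :
    ∑ k ∈ Finset.range n, (1 - c k) * ∏ j ∈ Finset.Ioo k n, c j
      = 1 - ∏ j ∈ Finset.range n, c j := by
  induction n with
  | zero => simp
  | succ n ih =>
    rw [Finset.sum_range_succ, Finset.prod_range_succ]
    have h0 : Finset.Ioo n (n + 1) = ∅ := by
      ext x; simp only [Finset.mem_Ioo, Finset.notMem_empty, iff_false]; omega
    have h1 : ∑ k ∈ Finset.range n, (1 - c k) * ∏ j ∈ Finset.Ioo k (n + 1), c j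
        = c n * ∑ k ∈ Finset.range n, (1 - c k) * ∏ j ∈ Finset.Ioo k n, c j := by
      rw [Finset.mul_sum]
      refine Finset.sum_congr rfl fun k hk => ?_
      have hk' : k < n := Finset.mem_range.mp hk
      have h2 : Finset.Ioo k (n + 1) = insert n (Finset.Ioo k n) := by
        ext x; simp only [Finset.mem_Ioo, Finset.mem_insert]; omega
      rw [h2, Finset.prod_insert (by simp)]
      ring
    rw [h0, h1, ih]
    simp only [Finset.prod_empty, mul_one]
    ring

/-- Transfer a filtered product over `Fin N` to a filtered product over `range N`. -/
private lemma finprod_filter {N : ℕ} (g : Fin N → ℝ) (G : ℕ → ℝ)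
    (hG : ∀ j : Fin N, G (j : ℕ) = g j) (p : ℕ → Prop) [DecidablePred p] :
    (∏ j ∈ Finset.univ.filter (fun j : Fin N => p (j : ℕ)), g j)
      = ∏ m ∈ (Finset.range N).filter p, G m := by
  rw [Finset.prod_filter, Finset.prod_filter,
    ← Fin.prod_univ_eq_prod_range (fun m => if p m then G m else 1)]
  exact Finset.prod_congr rfl fun j _ => by by_cases h : p (j : ℕ) <;> simp [h, hG j]

/-- Transfer a filtered sum over `Fin N` to a filtered sum over `range N`. -/
private lemma finsum_filter {N : ℕ} (g : Fin N → ℝ) (G : ℕ → ℝ)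
    (hG : ∀ j : Fin N, G (j : ℕ) = g j) (p : ℕ → Prop) [DecidablePred p] :
    (∑ j ∈ Finset.univ.filter (fun j : Fin N => p (j : ℕ)), g j)
      = ∑ m ∈ (Finset.range N).filter p, G m := by
  rw [Finset.sum_filter, Finset.sum_filter,
    ← Fin.sum_univ_eq_sum_range (fun m => if p m then G m else 0)]
  exact Finset.sum_congr rfl fun j _ => by by_cases h : p (j : ℕ) <;> simp [h, hG j]

/-- Fix an integer `d ≥ 3`, `u > 0`, `θ ∈ (-π/2, π/2)` and
`φ₁, …, φ_{d-2} ∈ (-π/2, π/2)`.  Then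
`R* = 2 cos θ / (1 - sin² θ cos² φ_{d-2} ⋯ cos² φ₁)` is the unique `R > 0` such that
`x + v(R)` lies on the infinite unit cylinder `C̄ = {y : y₂² + ⋯ + y_d² = 1}`. -/
theorem exit_radius_unique (d : ℕ) (hd : 3 ≤ d) (u : ℝ) (hu : 0 < u)
    (θ : ℝ) (hθ : θ ∈ Set.Ioo (-(π / 2)) (π / 2))
    (φ : Fin (d - 2) → ℝ) (hφ : ∀ j, φ j ∈ Set.Ioo (-(π / 2)) (π / 2))
    (Rstar : ℝ)
    (hRstar : Rstar = 2 * Real.cos θ /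
      (1 - Real.sin θ ^ 2 * ∏ j : Fin (d - 2), Real.cos (φ j) ^ 2)) :
    0 < Rstar ∧
      ∀ R : ℝ, 0 < R →
        ((∑ i ∈ Finset.univ.filter (fun i : Fin d => 0 < (i : ℕ)),
            (rayStart d u i + rayVector d θ φ R i) ^ 2 = 1) ↔ R = Rstar) := by
  obtain ⟨n, rfl⟩ : ∃ n, d = n + 3 := ⟨d - 3, by omega⟩
  have hd2 : n + 3 - 2 = n + 1 := rfl
  obtain ⟨hθ1, hθ2⟩ := hθ
  have hcos : 0 < Real.cos θ := Real.cos_pos_of_mem_Ioo ⟨hθ1, hθ2⟩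
  set P : ℝ := ∏ j : Fin (n + 3 - 2), Real.cos (φ j) ^ 2 with hPdef
  have hcosφ : ∀ j, 0 < Real.cos (φ j) := fun j => Real.cos_pos_of_mem_Ioo (hφ j)
  have hPpos : 0 < P := Finset.prod_pos fun j _ => pow_pos (hcosφ j) 2
  have hPle : P ≤ 1 := by
    apply Finset.prod_le_one (fun j _ => by positivity) (fun j _ => ?_)
    have h1 := Real.cos_le_one (φ j)
    have h2 := (hcosφ j).le
    nlinarith
  have hsin : Real.sin θ ^ 2 < 1 := by nlinarith [Real.sin_sq_add_cos_sq θ]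
  have hD : 0 < 1 - Real.sin θ ^ 2 * P := by nlinarith [sq_nonneg (Real.sin θ)]
  have hR0 : 0 < Rstar := by rw [hRstar]; positivity
  refine ⟨hR0, fun R hR => ?_⟩
  have hDne : 1 - Real.sin θ ^ 2 * P ≠ 0 := ne_of_gt hD
  -- ℕ-indexed versions of the data
  classical
  set Cos : ℕ → ℝ := fun m => if h : m < n + 1 then Real.cos (φ ⟨m, h⟩) else 1 with hCos
  set Sin : ℕ → ℝ := fun m => if h : m < n + 1 then Real.sin (φ ⟨m, h⟩) else 0 with hSin
  set G : ℕ → ℝ := fun m =>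
    ((if m = 0 then -u else if m = n + 2 then (-1 : ℝ) else 0) +
      (if m = 0 then R * Real.sin θ * ∏ j : Fin (n + 3 - 2), Real.cos (φ j)
       else if m = n + 2 then R * Real.cos θ
       else R * Real.sin θ * Sin (m - 1) * ∏ j ∈ Finset.Ico m (n + 1), Cos j)) ^ 2
    with hG
  have hfilter : ∀ m : ℕ, ((Finset.range (n + 3 - 2)).filter (fun j => m ≤ j))
      = Finset.Ico m (n + 1) := by
    intro m; ext x
    simp only [Finset.mem_filter, Finset.mem_range, Finset.mem_Ico]
    omega
  have htransfer : (∑ i ∈ Finset.univ.filter (fun i : Fin (n + 3) => 0 < (i : ℕ)),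
        (rayStart (n + 3) u i + rayVector (n + 3) θ φ R i) ^ 2)
      = ∑ m ∈ (Finset.range (n + 3)).filter (fun m => 0 < m), G m := by
    refine finsum_filter _ _ (fun i => ?_) _
    simp only [hG, rayStart, rayVector, PiLp.toLp_apply]
    by_cases h0 : (i : ℕ) = 0
    · rw [if_pos h0, if_pos h0, if_pos h0, dif_pos h0]
    · by_cases hlast : (i : ℕ) = n + 3 - 1
      · have hlast' : (i : ℕ) = n + 2 := by omega
        rw [if_neg h0, if_pos hlast', if_neg h0, if_pos hlast',
          if_neg h0, if_pos hlast, dif_neg h0, dif_pos hlast]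
      · have hne : ¬ (i : ℕ) = n + 2 := by omega
        have hi := i.isLt
        have him : (i : ℕ) - 1 < n + 1 := by omega
        rw [if_neg h0, if_neg hne, if_neg h0, if_neg hne,
          if_neg h0, if_neg hlast, dif_neg h0, dif_neg hlast]
        have hSineq : Sin ((i : ℕ) - 1)
            = Real.sin (φ ⟨(i : ℕ) - 1, by omega⟩) := by
          simp only [hSin]; rw [dif_pos him]
        have hProd : (∏ j ∈ Finset.univ.filter
              (fun j : Fin (n + 3 - 2) => (i : ℕ) ≤ (j : ℕ)), Real.cos (φ j))
            = ∏ j ∈ Finset.Ico (i : ℕ) (n + 1), Cos j := by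
          rw [finprod_filter (fun j => Real.cos (φ j)) Cos
            (fun j => by
              have hj : (j : ℕ) < n + 1 := by have := j.isLt; omega
              simp only [hCos]; rw [dif_pos hj]) (fun m => (i : ℕ) ≤ m)]
          rw [hfilter]
        rw [hSineq, hProd]
  rw [htransfer]
  have hset : (Finset.range (n + 3)).filter (fun m => 0 < m) = Finset.Ico 1 (n + 3) := by
    ext x; simp only [Finset.mem_filter, Finset.mem_range, Finset.mem_Ico]; omega
  rw [hset]
  have hsplit : ∑ m ∈ Finset.Ico 1 (n + 3), G m
      = ∑ m ∈ Finset.Ico 1 (n + 2), G m + G (n + 2) :=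
    Finset.sum_Ico_succ_top (by omega) G
  have hGlast : G (n + 2) = (R * Real.cos θ - 1) ^ 2 := by
    have hne : ¬ (n + 2 = 0) := by omega
    simp only [hG, if_true]
    rw [if_neg hne, if_neg hne]
    ring
  have hmid : ∑ m ∈ Finset.Ico 1 (n + 2), G m
      = R ^ 2 * Real.sin θ ^ 2 * (1 - ∏ j ∈ Finset.range (n + 1), Cos j ^ 2) := by
    rw [Finset.sum_Ico_eq_sum_range]
    have hrw : ∀ k ∈ Finset.range (n + 2 - 1), G (1 + k)
        = R ^ 2 * Real.sin θ ^ 2 *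
            ((1 - Cos k ^ 2) * ∏ j ∈ Finset.Ioo k (n + 1), Cos j ^ 2) := by
      intro k hk
      have hk' : k < n + 1 := by simpa using hk
      simp only [hG]
      rw [if_neg (by omega), if_neg (by omega), if_neg (by omega), if_neg (by omega)]
      have h1 : (1 : ℕ) + k - 1 = k := by omega
      have hIco : Finset.Ico (1 + k) (n + 1) = Finset.Ioo k (n + 1) := by
        ext x; simp only [Finset.mem_Ico, Finset.mem_Ioo]; omega
      have hsinsq : Sin k ^ 2 = 1 - Cos k ^ 2 := by
        simp only [hSin, hCos]
        rw [dif_pos hk', dif_pos hk', Real.sin_sq]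
      rw [h1, hIco, Finset.prod_pow]
      linear_combination (R ^ 2 * Real.sin θ ^ 2 *
        (∏ j ∈ Finset.Ioo k (n + 1), Cos j) ^ 2) * hsinsq
    rw [Finset.sum_congr rfl hrw, ← Finset.mul_sum]
    have := tele_aux (fun j => Cos j ^ 2) (n + 1)
    have hn : n + 2 - 1 = n + 1 := by omega
    rw [hn, this]
  have hPrw : ∏ j ∈ Finset.range (n + 1), Cos j ^ 2 = P := by
    rw [hPdef, ← Fin.prod_univ_eq_prod_range (fun j => Cos j ^ 2)]
    refine Finset.prod_congr rfl fun j _ => ?_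
    have hj : (j : ℕ) < n + 1 := by have := j.isLt; omega
    simp only [hCos]
    rw [dif_pos hj]
    rfl
  rw [hsplit, hGlast, hmid, hPrw]
  have pyth := Real.sin_sq_add_cos_sq θ
  constructor
  · intro h
    have hz : R * (R * (1 - Real.sin θ ^ 2 * P) - 2 * Real.cos θ) = 0 := by
      linear_combination h - R ^ 2 * pyth
    have hz2 : R * (1 - Real.sin θ ^ 2 * P) - 2 * Real.cos θ = 0 := by
      rcases mul_eq_zero.mp hz with h' | h'
      · exact absurd h' (ne_of_gt hR)
      · exact h'
    rw [hRstar, eq_div_iff hDne]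
    linear_combination hz2
  · intro h
    have hmul : R * (1 - Real.sin θ ^ 2 * P) = 2 * Real.cos θ := by
      rw [h, hRstar, div_mul_cancel₀ _ hDne]
    linear_combination R * hmul + R ^ 2 * pyth
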